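/- Let H be a nontrivial subgroup of G with H ≤ ι_A(A). Then the essential right cosets of H in G are exactly the cosets H·s with s ∈ ι₁(G₁) ∪ ι₂(G₂). -/

import Mathlib

open Monoid

section EssentialCosets

variable {A : Type} [Group A] {Gf : Bool → Type} [∀ i, Group (Gf i)]
  (φ : ∀ i : Bool, A →* Gf i)

/-- `g` lies in the image `ι_i(G_i)` of the `i`-th factor of the pushout. -/
def InFactor (i : Bool) (g : PushoutI φ) : Prop :=
  g ∈ (PushoutI.of (φ := φ) i).range

/-- `L = (g₁, …, g_n)` is a normal decomposition of `g ∈ G = G₁ *_A G₂`: it is a nonempty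
sequence with product `g`, each entry is a nontrivial element of `ι₁(G₁) ∪ ι₂(G₂)`,
consecutive entries do not lie in the same factor, and if `n > 1` then no entry lies in
`ι_A(A)`. -/
def IsNormalDecomp (g : PushoutI φ) (L : List (PushoutI φ)) : Prop :=
  L ≠ [] ∧ L.prod = g ∧
    (∀ x ∈ L, x ≠ 1 ∧ (InFactor φ true x ∨ InFactor φ false x)) ∧
    (∀ n : ℕ, ∀ x y : PushoutI φ, L[n]? = some x → L[n + 1]? = some y →
      ¬ (InFactor φ true x ∧ InFactor φ true y) ∧
      ¬ (InFactor φ false x ∧ InFactor φ false y)) ∧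
    (1 < L.length → ∀ x ∈ L, x ∉ (PushoutI.base φ).range)

/-- The right coset `H·c` is *essential* if either `H·c = H`, or there is `h ∈ H` with a
normal decomposition `(h₁, …, h_n)`, an index `0 ≤ m < n`, and an element `s` of a factor
`ι_i(G_i)` containing `h_{m+1}`, such that `H·c = H·h₁⋯h_m·s`. -/
def IsEssentialCoset (H : Subgroup (PushoutI φ)) (c : PushoutI φ) : Prop :=
  c ∈ H ∨ ∃ (L : List (PushoutI φ)) (m : ℕ) (s : PushoutI φ),
    IsNormalDecomp φ L.prod L ∧ L.prod ∈ H ∧ m < L.length ∧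
    (∃ (i : Bool) (x : PushoutI φ), L[m]? = some x ∧ InFactor φ i x ∧ InFactor φ i s) ∧
    c * ((L.take m).prod * s)⁻¹ ∈ H

/-- The collection of essential right cosets `H·c` of `H` in `G`, as a set of subsets of `G`. -/
def essentialCosets (H : Subgroup (PushoutI φ)) : Set (Set (PushoutI φ)) :=
  {S | ∃ c : PushoutI φ, IsEssentialCoset φ H c ∧ S = {g : PushoutI φ | g * c⁻¹ ∈ H}}

private theorem prod_not_mem_base (hφ : ∀ i, Function.Injective (φ i))
    (L : List (PushoutI φ)) (hL : L ≠ [])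
    (hmem : ∀ x ∈ L, x ≠ 1 ∧ (InFactor φ true x ∨ InFactor φ false x))
    (hpair : ∀ n : ℕ, ∀ x y : PushoutI φ, L[n]? = some x → L[n + 1]? = some y →
      ¬ (InFactor φ true x ∧ InFactor φ true y) ∧
      ¬ (InFactor φ false x ∧ InFactor φ false y))
    (hbase : ∀ x ∈ L, x ∉ (PushoutI.base φ).range) :
    L.prod ∉ (PushoutI.base φ).range := by
  classical
  -- choose for each element its factor data
  have hch : ∀ x : {y // y ∈ L}, ∃ p : Σ i, Gf i,
      PushoutI.of (φ := φ) p.1 p.2 = x.1 ∧ p.2 ∉ (φ p.1).range ∧ p.2 ≠ 1 := by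
    rintro ⟨x, hx⟩
    obtain ⟨hx1, hfac⟩ := hmem x hx
    obtain ⟨i, a, ha⟩ : ∃ i a, PushoutI.of (φ := φ) i a = x := by
      rcases hfac with ⟨a, ha⟩ | ⟨a, ha⟩
      exacts [⟨true, a, ha⟩, ⟨false, a, ha⟩]
    refine ⟨⟨i, a⟩, ha, ?_, ?_⟩
    · rintro ⟨b, hb⟩
      simp only at hb
      exact hbase x hx ⟨b, by rw [← ha, ← hb]; exact (PushoutI.of_apply_eq_base φ i b).symm⟩
    · intro h
      simp only at h
      exact hx1 (by rw [← ha, h, map_one])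
  choose f hf1 hf2 hf3 using hch
  -- each element lies in a unique factor
  have huniq : ∀ (x : {y // y ∈ L}) (j : Bool), InFactor φ j x.1 → j = (f x).1 := by
    intro x j hj
    by_contra hne
    have : x.1 ∈ (PushoutI.of (φ := φ) j).range ⊓ (PushoutI.of (φ := φ) (f x).1).range :=
      ⟨hj, ⟨(f x).2, hf1 x⟩⟩
    rw [PushoutI.inf_of_range_eq_base_range hφ hne] at this
    exact hbase x.1 x.2 this
  -- build the reduced word
  have hchain : (L.attach.map f).IsChain fun l l' => l.1 ≠ l'.1 := by
    rw [List.isChain_map]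
    rw [List.isChain_iff_getElem]
    intro n hn
    have hn' : n + 1 < L.length := by have := L.length_attach; omega
    set x := L.attach[n]'(by omega) with hxdef
    set y := L.attach[n + 1]'(by simpa using hn') with hydef
    have hxL : L[n]? = some x.1 := by
      rw [List.getElem?_eq_getElem (by omega)]
      simp [hxdef, List.get_attach]
    have hyL : L[n + 1]? = some y.1 := by
      rw [List.getElem?_eq_getElem hn']
      simp [hydef, List.get_attach]
    obtain ⟨h1, h2⟩ := hpair n x.1 y.1 hxL hyL
    intro heq
    have hx : InFactor φ (f x).1 x.1 := ⟨(f x).2, hf1 x⟩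
    have hy : InFactor φ (f y).1 y.1 := ⟨(f y).2, hf1 y⟩
    rw [← heq] at hy
    cases hb : (f x).1 with
    | true => exact h1 ⟨by rwa [hb] at hx, by rwa [hb] at hy⟩
    | false => exact h2 ⟨by rwa [hb] at hx, by rwa [hb] at hy⟩
  set w : CoprodI.Word Gf :=
    ⟨L.attach.map f, by
      intro l hl
      rcases List.mem_map.1 hl with ⟨x, hx, rfl⟩
      exact hf3 x, hchain⟩ with hw
  have hred : PushoutI.Reduced φ w := by
    intro g hg
    rcases List.mem_map.1 hg with ⟨x, hx, rfl⟩
    exact hf2 x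
  have hprod : PushoutI.ofCoprodI (φ := φ) w.prod = L.prod := by
    rw [CoprodI.Word.prod, ← List.prod_hom _ (PushoutI.ofCoprodI (φ := φ))]
    simp only [hw, List.map_map]
    congr 1
    rw [show (PushoutI.ofCoprodI (φ := φ)) ∘ (fun l : Σ i, Gf i => CoprodI.of l.2) ∘ f
        = fun x => PushoutI.of (φ := φ) (f x).1 (f x).2 from rfl]
    calc L.attach.map (fun x => PushoutI.of (φ := φ) (f x).1 (f x).2)
        = L.attach.map (fun x => x.1) := List.map_congr_left (fun x _ => hf1 x)
      _ = L := L.attach_map_subtype_val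
  intro hmem'
  rw [← hprod] at hmem'
  have := hred.eq_empty_of_mem_range hφ hmem'
  have : L.attach.map f = [] := congrArg CoprodI.Word.toList this
  simp at this
  exact hL this

end EssentialCosets

/-- Let `H` be a nontrivial subgroup of the amalgam `G = G₁ *_A G₂` of finite groups with
`H ≤ ι_A(A)`. Then the essential right cosets of `H` in `G` are exactly the cosets `H·s`
with `s ∈ ι₁(G₁) ∪ ι₂(G₂)`. -/
theorem essentialCosets_of_le_base
    (A : Type) [Group A] (Gf : Bool → Type) [∀ i, Group (Gf i)] [∀ i, Finite (Gf i)]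
    (φ : ∀ i : Bool, A →* Gf i) (hφ : ∀ i, Function.Injective (φ i))
    (H : Subgroup (PushoutI φ)) (hne : H ≠ ⊥)
    (hle : H ≤ (PushoutI.base φ).range) :
    ∀ c : PushoutI φ, IsEssentialCoset φ H c ↔
      ∃ s : PushoutI φ,
        (s ∈ (PushoutI.of (φ := φ) true).range ∨ s ∈ (PushoutI.of (φ := φ) false).range) ∧
        c * s⁻¹ ∈ H := by
  intro c
  constructor
  · rintro (hc | ⟨L, m, s, ⟨hLne, -, hmem, hpair, hlen⟩, hLH, hm, ⟨i, x, hget, hix, his⟩, hcoset⟩)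
    · exact ⟨1, Or.inl (one_mem _), by simpa using hc⟩
    · have hlen1 : L.length = 1 := by
        by_contra hne1
        have hpos : 0 < L.length := List.length_pos_iff.2 hLne
        have h1 : 1 < L.length := by omega
        exact prod_not_mem_base φ hφ L hLne hmem hpair (hlen h1) (hle hLH)
      have hm0 : m = 0 := by omega
      subst hm0
      refine ⟨s, ?_, by simpa using hcoset⟩
      cases i with
      | true => exact Or.inl his
      | false => exact Or.inr his
  · rintro ⟨s, hs, hcs⟩
    obtain ⟨⟨h, hH⟩, hh1⟩ := Subgroup.ne_bot_iff_exists_ne_one.1 hne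
    have hh1' : h ≠ 1 := fun e => hh1 (Subtype.ext e)
    obtain ⟨a, ha⟩ := hle hH
    have hfac : ∀ j : Bool, InFactor φ j h :=
      fun j => ⟨φ j a, by rw [PushoutI.of_apply_eq_base, ha]⟩
    obtain ⟨i, hi⟩ : ∃ i : Bool, InFactor φ i s := by
      rcases hs with h' | h'
      exacts [⟨true, h'⟩, ⟨false, h'⟩]
    right
    refine ⟨[h], 0, s, ⟨by simp, rfl, ?_, ?_, by simp⟩, by simpa using hH, by simp,
      ⟨i, h, rfl, hfac i, hi⟩, by simpa using hcs⟩
    · intro x hx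
      rw [List.mem_singleton] at hx
      subst hx
      exact ⟨hh1', Or.inl (hfac true)⟩
    · intro n x y hx hy
      simp at hy
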